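/- arXiv:math/9809079 — 2 statements merged into one kernel-verified Lean document; each statement's English description precedes it below -/
import Mathlib

section
/- Let S = {a_1, ..., a_n} be a multiset of nonnegative integers (n >= 2) with at least two of the a_i positive. There exist nonnegative integers t_1, ..., t_n with t_i >= a_i for all i such that nim-sum of t_1, ..., t_n equals nim-sum of (t_1 - a_1), ..., (t_n - a_n), if and only if S is balanced. -/
/-- The nim-sum (bitwise XOR) of a list of naturals. -/
def nimSum (l : List ℕ) : ℕ := l.foldr (· ^^^ ·) 0



/-! ### Basic xor bit lemmas -/

lemma xor_mod_two (x y : ℕ) : (x ^^^ y) % 2 = (x % 2) ^^^ (y % 2) := by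
  have := Nat.testBit_xor x y 0
  simp [Nat.testBit_eq_decide_div_mod_eq] at this
  rcases Nat.mod_two_eq_zero_or_one x with h|h <;>
    rcases Nat.mod_two_eq_zero_or_one y with h2|h2 <;>
      simp [h, h2] at this ⊢ <;> omega

lemma XB2 (a b a0 b0 : ℕ) (ha0 : a0 ≤ 1) (hb0 : b0 ≤ 1) :
    (2*a + a0) ^^^ (2*b + b0) = 2*(a ^^^ b) + (a0 ^^^ b0) := by
  have h1 : ((2*a + a0) ^^^ (2*b + b0)) / 2 = a ^^^ b := by
    rw [Nat.xor_div_two]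
    congr 1 <;> omega
  have h2 : ((2*a + a0) ^^^ (2*b + b0)) % 2 = a0 ^^^ b0 := by
    rw [xor_mod_two]
    congr 1 <;> omega
  omega

lemma bitxor_le (a b : ℕ) (ha : a ≤ 1) (hb : b ≤ 1) : a ^^^ b ≤ 1 := by
  interval_cases a <;> interval_cases b <;> decide

/-- choice of low bits in the merge construction -/
lemma bits_choice (s0 x0 y0 α β : ℕ) (h1 : s0 ≤ 1) (h2 : x0 ≤ 1) (h3 : y0 ≤ 1)
    (h4 : α ≤ 1) (h5 : β ≤ 1) :
    ∃ u0 w0, u0 ≤ 1 ∧ w0 ≤ 1 ∧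
      ((u0 + x0 + α)/2) ^^^ ((w0 + y0 + β)/2) = (s0 + (x0 ^^^ y0) + (α ^^^ β))/2 := by
  interval_cases s0 <;> interval_cases x0 <;> interval_cases y0 <;>
    interval_cases α <;> interval_cases β <;>
    first
      | exact ⟨0, 0, by decide, by decide, by decide⟩
      | exact ⟨0, 1, by decide, by decide, by decide⟩
      | exact ⟨1, 0, by decide, by decide, by decide⟩
      | exact ⟨1, 1, by decide, by decide, by decide⟩

lemma bits_low (s0 x0 y0 α β u0 w0 : ℕ) (h1 : s0 ≤ 1) (h2 : x0 ≤ 1) (h3 : y0 ≤ 1)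
    (h4 : α ≤ 1) (h5 : β ≤ 1) (h6 : u0 ≤ 1) (h7 : w0 ≤ 1) :
    ((s0 + (x0 ^^^ y0) + (α ^^^ β)) % 2) ^^^ s0
      = (((u0 + x0 + α) % 2) ^^^ u0) ^^^ (((w0 + y0 + β) % 2) ^^^ w0) := by
  interval_cases s0 <;> interval_cases x0 <;> interval_cases y0 <;>
    interval_cases α <;> interval_cases β <;> interval_cases u0 <;> interval_cases w0 <;> decide

/-! ### The merge lemma -/

lemma merge' : ∀ (N : ℕ), ∀ s x y α β : ℕ, s + x + y ≤ N → α ≤ 1 → β ≤ 1 →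
    ∃ u w, ((s + (x ^^^ y) + (α ^^^ β)) ^^^ s)
      = (((u + x + α) ^^^ u) ^^^ ((w + y + β) ^^^ w)) := by
  intro N
  induction N with
  | zero =>
    intro s x y α β hN hα hβ
    have hs : s = 0 := by omega
    have hx : x = 0 := by omega
    have hy : y = 0 := by omega
    subst hs; subst hx; subst hy
    exact ⟨0, 0, by simp⟩
  | succ N IH =>
    intro s x y α β hN hα hβ
    by_cases h0 : s = 0 ∧ x = 0 ∧ y = 0
    · obtain ⟨hs, hx, hy⟩ := h0
      subst hs; subst hx; subst hy
      exact ⟨0, 0, by simp⟩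
    · obtain ⟨s', s0, hs, hs0⟩ : ∃ q r, s = 2*q + r ∧ r ≤ 1 := ⟨s/2, s%2, by omega, by omega⟩
      obtain ⟨x', x0, hx, hx0⟩ : ∃ q r, x = 2*q + r ∧ r ≤ 1 := ⟨x/2, x%2, by omega, by omega⟩
      obtain ⟨y', y0, hy, hy0⟩ : ∃ q r, y = 2*q + r ∧ r ≤ 1 := ⟨y/2, y%2, by omega, by omega⟩
      subst hs; subst hx; subst hy
      obtain ⟨u0, w0, hu0, hw0, hbits⟩ := bits_choice s0 x0 y0 α β hs0 hx0 hy0 hα hβ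
      set α' := (u0 + x0 + α)/2 with hα'
      set β' := (w0 + y0 + β)/2 with hβ'
      have hα'1 : α' ≤ 1 := by omega
      have hβ'1 : β' ≤ 1 := by omega
      have hrec : s' + x' + y' ≤ N := by omega
      obtain ⟨u', w', hIH⟩ := IH s' x' y' α' β' hrec hα'1 hβ'1
      refine ⟨2*u' + u0, 2*w' + w0, ?_⟩
      have hz0 : x0 ^^^ y0 ≤ 1 := bitxor_le _ _ hx0 hy0
      have hg : α ^^^ β ≤ 1 := bitxor_le _ _ hα hβ
      -- decompose LHS
      have e1 : (2*x' + x0) ^^^ (2*y' + y0) = 2*(x' ^^^ y') + (x0 ^^^ y0) := XB2 _ _ _ _ hx0 hy0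
      rw [e1]
      have e2 : (2*s' + s0) + (2*(x' ^^^ y') + (x0 ^^^ y0)) + (α ^^^ β)
          = 2*(s' + (x' ^^^ y') + ((s0 + (x0 ^^^ y0) + (α ^^^ β))/2))
            + ((s0 + (x0 ^^^ y0) + (α ^^^ β)) % 2) := by omega
      rw [e2]
      have e3 := XB2 (s' + (x' ^^^ y') + ((s0 + (x0 ^^^ y0) + (α ^^^ β))/2)) s'
        ((s0 + (x0 ^^^ y0) + (α ^^^ β)) % 2) s0 (by omega) hs0
      rw [e3]
      -- decompose RHS, u part
      have e4 : (2*u' + u0) + (2*x' + x0) + α = 2*(u' + x' + α') + ((u0 + x0 + α) % 2) := by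
        omega
      rw [e4]
      have e5 := XB2 (u' + x' + α') u' ((u0 + x0 + α) % 2) u0 (by omega) hu0
      rw [e5]
      -- w part
      have e6 : (2*w' + w0) + (2*y' + y0) + β = 2*(w' + y' + β') + ((w0 + y0 + β) % 2) := by
        omega
      rw [e6]
      have e7 := XB2 (w' + y' + β') w' ((w0 + y0 + β) % 2) w0 (by omega) hw0
      rw [e7]
      have e8 := XB2 ((u' + x' + α') ^^^ u') ((w' + y' + β') ^^^ w')
        (((u0 + x0 + α) % 2) ^^^ u0) (((w0 + y0 + β) % 2) ^^^ w0)
        (bitxor_le _ _ (by omega) hu0) (bitxor_le _ _ (by omega) hw0)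
      rw [e8]
      have hlow := bits_low s0 x0 y0 α β u0 w0 hs0 hx0 hy0 hα hβ hu0 hw0
      have hhigh : (s' + (x' ^^^ y') + ((s0 + (x0 ^^^ y0) + (α ^^^ β))/2)) ^^^ s'
          = ((u' + x' + α') ^^^ u') ^^^ ((w' + y' + β') ^^^ w') := by
        rw [← hIH, hbits]
      omega

lemma mergeD (s x y : ℕ) : ∃ u w, ((s + (x ^^^ y)) ^^^ s)
    = (((u + x) ^^^ u) ^^^ ((w + y) ^^^ w)) := by
  obtain ⟨u, w, h⟩ := merge' (s + x + y) s x y 0 0 le_rfl (by norm_num) (by norm_num)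
  simp at h
  exact ⟨u, w, h⟩



lemma nim_cons (x : ℕ) (l : List ℕ) : nimSum (x :: l) = x ^^^ nimSum l := rfl

lemma nim_ofFn_succ {n : ℕ} (f : Fin (n+1) → ℕ) :
    nimSum (List.ofFn f) = f 0 ^^^ nimSum (List.ofFn fun i => f i.succ) := by
  rw [List.ofFn_succ]; rfl

lemma xor_shuffle (a b c d : ℕ) : (a ^^^ b) ^^^ (c ^^^ d) = (a ^^^ c) ^^^ (b ^^^ d) := by
  rw [Nat.xor_assoc, Nat.xor_assoc]
  congr 1
  rw [← Nat.xor_assoc, ← Nat.xor_assoc]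
  congr 1
  exact Nat.xor_comm _ _

lemma ZIPF : ∀ (n : ℕ) (f g : Fin n → ℕ),
    nimSum (List.ofFn fun i => f i ^^^ g i) = nimSum (List.ofFn f) ^^^ nimSum (List.ofFn g) := by
  intro n
  induction n with
  | zero => intro f g; simp [List.ofFn_zero, nimSum]
  | succ n IH =>
    intro f g
    rw [nim_ofFn_succ, nim_ofFn_succ f, nim_ofFn_succ g, IH (fun i => f i.succ) (fun i => g i.succ)]
    exact xor_shuffle _ _ _ _

lemma nim_zero_fn : ∀ (n : ℕ), nimSum (List.ofFn (fun _ : Fin n => (0:ℕ))) = 0 := by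
  intro n
  induction n with
  | zero => simp [List.ofFn_zero, nimSum]
  | succ n IH => rw [nim_ofFn_succ]; simpa using IH

lemma SING : ∀ (n : ℕ) (p : Fin n) (v : ℕ),
    nimSum (List.ofFn fun i => if i = p then v else 0) = v := by
  intro n
  induction n with
  | zero => exact fun p => p.elim0
  | succ n IH =>
    intro p v
    rcases Fin.eq_zero_or_eq_succ p with hp | ⟨j, hp⟩
    · subst hp
      rw [nim_ofFn_succ]
      have : (fun i : Fin n => if i.succ = (0 : Fin (n+1)) then v else 0) = fun _ => 0 := by
        funext i; simp [Fin.succ_ne_zero]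
      simp only [this, nim_zero_fn]
      simp
    · subst hp
      rw [nim_ofFn_succ]
      have h0 : ((0 : Fin (n+1)) = j.succ) = False := by
        simp [(Fin.succ_ne_zero j).symm]
      have : (fun i : Fin n => if i.succ = j.succ then v else 0)
          = fun i : Fin n => if i = j then v else 0 := by
        funext i; simp [Fin.succ_inj]
      simp only [h0, if_false, this, IH j v]
      simp [Fin.succ_ne_zero j, eq_comm]

lemma UPD (n : ℕ) (f : Fin n → ℕ) (p : Fin n) (v : ℕ) :
    nimSum (List.ofFn (Function.update f p v)) = nimSum (List.ofFn f) ^^^ f p ^^^ v := by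
  have key : f = fun i => Function.update f p v i ^^^ (if i = p then v ^^^ f p else 0) := by
    funext i
    by_cases h : i = p
    · subst h
      simp [Function.update_self, ← Nat.xor_assoc]
    · simp [Function.update_of_ne h, h]
  have h2 : nimSum (List.ofFn f)
      = nimSum (List.ofFn (Function.update f p v)) ^^^ (v ^^^ f p) := by
    conv_lhs => rw [key]
    rw [ZIPF, SING]
  rw [h2]
  rw [Nat.xor_assoc, Nat.xor_assoc, Nat.xor_comm (f p) v, Nat.xor_self, Nat.xor_zero]

lemma TBCONG : ∀ (n : ℕ) (k : ℕ) (f g : Fin n → ℕ),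
    (∀ i, (f i).testBit k = (g i).testBit k) →
    (nimSum (List.ofFn f)).testBit k = (nimSum (List.ofFn g)).testBit k := by
  intro n
  induction n with
  | zero => intro k f g _; rfl
  | succ n IH =>
    intro k f g h
    rw [nim_ofFn_succ, nim_ofFn_succ g, Nat.testBit_xor, Nat.testBit_xor,
      h 0, IH k (fun i => f i.succ) (fun i => g i.succ) (fun i => h i.succ)]



-- scaling: xor commutes with multiplication by 2^k
lemma XS : ∀ (k u v : ℕ), (2^k * u) ^^^ (2^k * v) = 2^k * (u ^^^ v) := by
  intro k
  induction k with
  | zero => intro u v; simp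
  | succ k IH =>
    intro u v
    have h : ∀ w : ℕ, 2^(k+1) * w = 2 * (2^k * w) := by intro w; ring
    rw [h u, h v, h (u ^^^ v)]
    have := XB2 (2^k * u) (2^k * v) 0 0 (by norm_num) (by norm_num)
    simpa [IH] using this

lemma DVDX (k x y : ℕ) (hx : 2^k ∣ x) (hy : 2^k ∣ y) : 2^k ∣ (x ^^^ y) := by
  obtain ⟨x', rfl⟩ := hx
  obtain ⟨y', rfl⟩ := hy
  rw [XS]
  exact Dvd.intro _ rfl

-- complement lemma
lemma CL : ∀ (m u v : ℕ), u + v = 2^m - 1 → u ^^^ v = 2^m - 1 := by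
  intro m
  induction m with
  | zero =>
    intro u v h
    have h' : u + v = 0 := by simpa using h
    have hu : u = 0 := by omega
    have hv : v = 0 := by omega
    subst hu; subst hv; simp
  | succ m IH =>
    intro u v h
    have hp : (2:ℕ)^(m+1) = 2 * 2^m := by ring
    have hm1 : (1:ℕ) ≤ 2^m := Nat.one_le_two_pow
    have hu : u = 2*(u/2) + u%2 := by omega
    have hv : v = 2*(v/2) + v%2 := by omega
    have hmod : u%2 + v%2 = 1 := by omega
    have hdiv : u/2 + v/2 = 2^m - 1 := by omega
    have := XB2 (u/2) (v/2) (u%2) (v%2) (by omega) (by omega)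
    have hIH := IH (u/2) (v/2) hdiv
    have hbit : (u%2) ^^^ (v%2) = 1 := by
      rcases Nat.mod_two_eq_zero_or_one u with h1|h1 <;>
        rcases Nat.mod_two_eq_zero_or_one v with h2|h2 <;> simp [h1,h2] at hmod ⊢
    calc u ^^^ v = (2*(u/2) + u%2) ^^^ (2*(v/2) + v%2) := by rw [← hu, ← hv]
    _ = 2*((u/2) ^^^ (v/2)) + ((u%2) ^^^ (v%2)) := this
    _ = 2^(m+1) - 1 := by rw [hIH, hbit]; omega

-- common element of D(2^k α) for α odd
lemma CD (k α m : ℕ) (hα : α % 2 = 1) (hm : α < 2^m) :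
    ∃ s, (s + 2^k * α) ^^^ s = 2^k * (2^m - 1) := by
  rcases m with _|m
  · exfalso; omega
  refine ⟨2^k * ((2^(m+1) - 1 - α)/2), ?_⟩
  have hm1 : (1:ℕ) ≤ 2^(m+1) := Nat.one_le_two_pow
  have hp : (2:ℕ)^(m+1) = 2 * 2^m := by ring
  set e := (2^(m+1) - 1 - α)/2 with he
  have h2e : 2*e + α = 2^(m+1) - 1 := by omega
  have h1 : 2^k * e + 2^k * α = 2^k * (e + α) := by ring
  rw [h1, XS]
  congr 1
  have : (e + α) + e = 2^(m+1) - 1 := by omega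
  exact CL (m+1) (e + α) e this

-- unmerge over a Fin tuple
lemma UM : ∀ (n : ℕ) (f : Fin n → ℕ) (s : ℕ),
    ∃ v : Fin n → ℕ,
      (s + nimSum (List.ofFn f)) ^^^ s = nimSum (List.ofFn fun i => (v i + f i) ^^^ v i) := by
  intro n
  induction n with
  | zero =>
    intro f s
    refine ⟨fun _ => 0, ?_⟩
    simp [List.ofFn_zero, nimSum]
  | succ n IH =>
    intro f s
    obtain ⟨u, w, h1⟩ := mergeD s (f 0) (nimSum (List.ofFn fun i => f i.succ))
    obtain ⟨v', h2⟩ := IH (fun i => f i.succ) w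
    refine ⟨(Fin.cons u v' : Fin (n+1) → ℕ), ?_⟩
    rw [nim_ofFn_succ f, h1, h2]
    have h3 := nim_ofFn_succ
      (fun i : Fin (n+1) => ((Fin.cons u v' : Fin (n+1) → ℕ) i + f i)
        ^^^ (Fin.cons u v' : Fin (n+1) → ℕ) i)
    rw [h3]
    simp only [Fin.cons_zero, Fin.cons_succ]

-- subtraction bit lemma
lemma subBit (k a t : ℕ) (hd : 2^k ∣ a) (h : a ≤ t) :
    (t - a).testBit k = ((t.testBit k) ^^ (a.testBit k)) := by
  obtain ⟨α, rfl⟩ := hd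
  have hpos : (0:ℕ) < 2^k := Nat.two_pow_pos k
  have hq : α ≤ t / 2^k := by
    rw [Nat.le_div_iff_mul_le hpos]
    calc α * 2^k = 2^k * α := by ring
    _ ≤ t := h
  obtain ⟨δ, hδ⟩ : ∃ δ, t / 2^k = α + δ := ⟨t / 2^k - α, by omega⟩
  have ht : t = 2^k * α + 2^k * δ + t % 2^k := by
    have := Nat.div_add_mod t (2^k)
    nlinarith [this, hδ]
  have hs : t - 2^k * α = 2^k * δ + t % 2^k := by omega
  have hdiv : (t - 2^k * α) / 2^k = δ := by
    rw [hs, Nat.mul_add_div hpos, Nat.div_eq_of_lt (Nat.mod_lt _ hpos), Nat.add_zero]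
  have hadiv : (2^k * α) / 2^k = α := Nat.mul_div_cancel_left α hpos
  rw [Nat.testBit_eq_decide_div_mod_eq, Nat.testBit_eq_decide_div_mod_eq, Nat.testBit_eq_decide_div_mod_eq, hdiv, hadiv, hδ]
  rcases Nat.mod_two_eq_zero_or_one δ with h1|h1 <;>
    rcases Nat.mod_two_eq_zero_or_one α with h2|h2 <;>
    · have h3 : (α + δ) % 2 = 0 ∨ (α + δ) % 2 = 1 := by omega
      rcases h3 with h3|h3 <;> simp [h1, h2, h3] <;> omega

lemma DVDF : ∀ (n k : ℕ) (f : Fin n → ℕ), (∀ i, 2^k ∣ f i) → 2^k ∣ nimSum (List.ofFn f) := by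
  intro n
  induction n with
  | zero => intro k f _; simp [List.ofFn_zero, nimSum]
  | succ n IH =>
    intro k f h
    rw [nim_ofFn_succ]
    exact DVDX k _ _ (h 0) (IH k (fun i => f i.succ) (fun i => h i.succ))



theorem stmt7 (n : ℕ) (hn : 2 ≤ n) (a : Fin n → ℕ)
    (hpos : ∃ i j, i ≠ j ∧ 0 < a i ∧ 0 < a j)
    (k : ℕ) (hk : ∀ i, 2 ^ k ∣ a i) (hkmax : ¬ ∀ i, 2 ^ (k + 1) ∣ a i) :
    (∃ t : Fin n → ℕ, (∀ i, a i ≤ t i) ∧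
        nimSum (List.ofFn t) = nimSum (List.ofFn fun i => t i - a i)) ↔
      (nimSum (List.ofFn a)).testBit k = false := by
  constructor
  · rintro ⟨t, hle, heq⟩
    have h0 : nimSum (List.ofFn fun i => t i ^^^ (t i - a i)) = 0 := by
      rw [ZIPF n t (fun i => t i - a i), heq, Nat.xor_self]
    have hcong : (nimSum (List.ofFn fun i => t i ^^^ (t i - a i))).testBit k
        = (nimSum (List.ofFn a)).testBit k := by
      apply TBCONG
      intro i
      rw [Nat.testBit_xor, subBit k (a i) (t i) (hk i) (hle i)]
      cases (t i).testBit k <;> cases (a i).testBit k <;> rfl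
    rw [← hcong, h0, Nat.zero_testBit]
  · intro hbal
    obtain ⟨p, hp⟩ := not_forall.1 hkmax
    obtain ⟨α, hα⟩ := hk p
    have hαodd : α % 2 = 1 := by
      rcases Nat.mod_two_eq_zero_or_one α with h|h
      · exfalso
        apply hp
        refine ⟨α/2, ?_⟩
        have h2 : α = 2*(α/2) := by omega
        calc a p = 2^k * α := hα
        _ = 2^k * (2*(α/2)) := by rw [← h2]
        _ = 2^(k+1) * (α/2) := by ring
      · exact h
    have hpos2k : (0:ℕ) < 2^k := Nat.two_pow_pos k
    have htpa : (a p).testBit k = true := by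
      rw [hα, Nat.testBit_eq_decide_div_mod_eq, Nat.mul_div_cancel_left _ hpos2k]
      simp [hαodd]
    set b := nimSum (List.ofFn (Function.update a p 0)) with hbdef
    have hb : b = nimSum (List.ofFn a) ^^^ a p := by
      rw [hbdef, UPD, Nat.xor_zero]
    have hdvdb : 2^k ∣ b := by
      rw [hb]
      exact DVDX k _ _ (DVDF n k a hk) (hk p)
    obtain ⟨β, hβ⟩ := hdvdb
    have hβodd : β % 2 = 1 := by
      have htb : b.testBit k = true := by
        rw [hb, Nat.testBit_xor, hbal, htpa]
        rfl
      rw [hβ, Nat.testBit_eq_decide_div_mod_eq, Nat.mul_div_cancel_left _ hpos2k] at htb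
      simpa using htb
    set m := α + β + 1 with hm
    have hαlt : α < 2^m := lt_of_lt_of_le ((Nat.lt_two_pow_self (n := α)))
      (Nat.pow_le_pow_right (by norm_num) (by omega))
    have hβlt : β < 2^m := lt_of_lt_of_le ((Nat.lt_two_pow_self (n := β)))
      (Nat.pow_le_pow_right (by norm_num) (by omega))
    obtain ⟨sa, hsa⟩ := CD k α m hαodd hαlt
    obtain ⟨sb, hsb⟩ := CD k β m hβodd hβlt
    obtain ⟨v, hv⟩ := UM n (Function.update a p 0) sb
    set d := 2^k * (2^m - 1) with hd
    set g := (fun i => (v i + Function.update a p 0 i) ^^^ v i) with hg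
    have hXg : nimSum (List.ofFn g) = d := by
      rw [← hv, ← hbdef, hβ, hsb]
    have hgp : g p = 0 := by
      rw [hg]
      simp
    refine ⟨Function.update (fun i => v i + a i) p (sa + a p), fun i => ?_, ?_⟩
    · by_cases h : i = p
      · subst h
        rw [Function.update_self]
        exact Nat.le_add_left _ _
      · rw [Function.update_of_ne h]
        exact Nat.le_add_left _ _
    · set t := Function.update (fun i => v i + a i) p (sa + a p) with ht
      have htw : (fun i => t i ^^^ (t i - a i)) = Function.update g p d := by
        funext i
        by_cases h : i = p
        · subst h
          rw [ht, Function.update_self, Function.update_self, Nat.add_sub_cancel, hα, hsa]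
        · rw [ht, Function.update_of_ne h, Function.update_of_ne h, Nat.add_sub_cancel, hg]
          simp only
          rw [Function.update_of_ne h]
      have hX0 : nimSum (List.ofFn fun i => t i ^^^ (t i - a i)) = 0 := by
        rw [htw, UPD, hXg, hgp, Nat.xor_zero, Nat.xor_self]
      have hz := ZIPF n t (fun i => t i - a i)
      rw [hX0] at hz
      exact xor_eq_zero_iff.1 hz.symm
end

section
/- Let n >= 4 be even, and let S = {a_1, ..., a_n} be a smooth multiset of nonnegative integers with at least two a_i positive. Then there exist nonnegative integers t_1, ..., t_n with t_i >= a_i for all i such that the nim-sum of t_1, ..., t_n is 0 and the nim-sum of (t_1 - a_1), ..., (t_n - a_n) is 0. -/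
lemma nimSum_cons (a : ℕ) (l : List ℕ) : nimSum (a :: l) = a ^^^ nimSum l := rfl

lemma xor_two_bit (a b x y : ℕ) (ha : a ≤ 1) (hb : b ≤ 1) :
    (a + 2 * x) ^^^ (b + 2 * y) = (a + b) % 2 + 2 * (x ^^^ y) := by
  apply Nat.eq_of_testBit_eq
  intro i
  cases i with
  | zero =>
    have h1 : (a + 2 * x) % 2 = a := by omega
    have h2 : (b + 2 * y) % 2 = b := by omega
    have h3 : ((a + b) % 2 + 2 * (x ^^^ y)) % 2 = (a + b) % 2 := by omega
    simp only [Nat.testBit_zero, Nat.testBit_xor, h1, h2, h3]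
    interval_cases a <;> interval_cases b <;> simp <;> omega
  | succ i =>
    have h1 : (a + 2 * x) / 2 = x := by omega
    have h2 : (b + 2 * y) / 2 = y := by omega
    have h3 : ((a + b) % 2 + 2 * (x ^^^ y)) / 2 = x ^^^ y := by omega
    rw [Nat.testBit_xor, Nat.testBit_succ, Nat.testBit_succ, Nat.testBit_succ,
      h1, h2, h3, Nat.testBit_xor]

lemma nimSum_bits : ∀ {n : ℕ} (f g : Fin n → ℕ), (∀ i, f i ≤ 1) →
    nimSum (List.ofFn fun i => f i + 2 * g i) = (∑ i, f i) % 2 + 2 * nimSum (List.ofFn g) := by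
  intro n
  induction n with
  | zero => intro f g _; simp [nimSum]
  | succ m ih =>
    intro f g hf
    rw [List.ofFn_succ, List.ofFn_succ (f := g), nimSum_cons, nimSum_cons,
      ih _ _ (fun i => hf i.succ), xor_two_bit _ _ _ _ (hf 0) (by omega),
      Fin.sum_univ_succ]
    congr 1
    omega

lemma nimSum_mod_two {n : ℕ} (f : Fin n → ℕ) :
    nimSum (List.ofFn f) % 2 = (∑ i, f i) % 2 := by
  have hfe : (fun i => f i % 2 + 2 * (f i / 2)) = f := funext fun i => by omega
  have h : nimSum (List.ofFn fun i => f i % 2 + 2 * (f i / 2))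
      = (∑ i, f i % 2) % 2 + 2 * nimSum (List.ofFn fun i => f i / 2) :=
    nimSum_bits _ _ (fun i => by show f i % 2 ≤ 1; omega)
  rw [hfe] at h
  have h2 : (∑ i, f i) % 2 = (∑ i, f i % 2) % 2 := Finset.sum_nat_mod _ _ _
  omega

lemma nimSum_double {n : ℕ} (f : Fin n → ℕ) :
    nimSum (List.ofFn fun i => 2 * f i) = 2 * nimSum (List.ofFn f) := by
  have h : nimSum (List.ofFn fun i => 0 + 2 * f i)
      = (∑ _i : Fin n, 0) % 2 + 2 * nimSum (List.ofFn f) :=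
    nimSum_bits _ _ (fun i => by show (0:ℕ) ≤ 1; omega)
  simpa using h

lemma nimSum_pow {n : ℕ} (k : ℕ) : ∀ f : Fin n → ℕ,
    nimSum (List.ofFn fun i => 2 ^ k * f i) = 2 ^ k * nimSum (List.ofFn f) := by
  induction k with
  | zero => intro f; simp
  | succ j ihj =>
    intro f
    have hfe : (fun i => 2 ^ (j + 1) * f i) = fun i => 2 ^ j * (2 * f i) := by
      funext i; ring
    rw [hfe, ihj (fun i => 2 * f i), nimSum_double]
    ring

lemma nimSum_zero_fn : ∀ {n : ℕ}, nimSum (List.ofFn fun _ : Fin n => 0) = 0 := by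
  intro n
  induction n with
  | zero => rfl
  | succ m ih => rw [List.ofFn_succ, nimSum_cons, ih]; rfl

lemma glue {n : ℕ} (b ε : Fin n → ℕ) (hε1 : ∀ i, ε i ≤ 1)
    (hεpar : (∑ i, ε i) % 2 = 0)
    (hcpar : (∑ i, (b i + ε i) % 2) % 2 = 0)
    (hrec : ∃ x', nimSum (List.ofFn x') = 0 ∧
      nimSum (List.ofFn fun i => (b i + ε i) / 2 + x' i) = 0) :
    ∃ x, nimSum (List.ofFn x) = 0 ∧ nimSum (List.ofFn fun i => b i + x i) = 0 := by
  obtain ⟨x', h1, h2⟩ := hrec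
  refine ⟨fun i => ε i + 2 * x' i, ?_, ?_⟩
  · rw [nimSum_bits ε x' hε1, h1, hεpar]
  · have hfe : (fun i => b i + (ε i + 2 * x' i))
        = fun i => (b i + ε i) % 2 + 2 * ((b i + ε i) / 2 + x' i) := funext fun i => by omega
    rw [hfe, nimSum_bits _ _ (fun i => by omega), h2, hcpar]

lemma card_next {n : ℕ} (v : Fin n → ℕ) (T E1 : Finset (Fin n))
    (h : ∀ i, v i % 2 = (if i ∈ T then 1 else 0) + (if i ∈ E1 then 1 else 0)) :
    (Finset.univ.filter fun i => v i % 2 = 1).card = T.card + E1.card := by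
  rw [Finset.card_filter]
  have hpt : ∀ i, (if v i % 2 = 1 then 1 else 0)
      = (if i ∈ T then 1 else 0) + (if i ∈ E1 then 1 else 0) := by
    intro i
    have hh := h i
    by_cases hT : i ∈ T <;> by_cases hE : i ∈ E1 <;> simp [hT, hE] at hh ⊢ <;> omega
  rw [Finset.sum_congr rfl (fun i _ => hpt i), Finset.sum_add_distrib]
  congr 1
  · simpa using Finset.sum_ite_mem Finset.univ T (fun _ => 1)
  · simpa using Finset.sum_ite_mem Finset.univ E1 (fun _ => 1)

lemma core {n : ℕ} (hn4 : 4 ≤ n) (hne : Even n) :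
    ∀ N : ℕ, ∀ b : Fin n → ℕ, (∑ i, b i) ≤ N →
    Even (Finset.univ.filter (fun i => b i % 2 = 1)).card →
    2 ≤ (Finset.univ.filter (fun i => b i % 2 = 1)).card →
    ((Finset.univ.filter (fun i => b i % 2 = 1)).card ≤ n - 2 ∨ nimSum (List.ofFn b) % 4 = 0) →
    ∃ x : Fin n → ℕ, nimSum (List.ofFn x) = 0 ∧
      nimSum (List.ofFn fun i => b i + x i) = 0 := by
  classical
  intro N
  induction N with
  | zero =>
    intro b hS hEvenO hO2 _
    exfalso
    have hpos : ∃ i, b i % 2 = 1 := by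
      have hne' : (Finset.univ.filter fun i => b i % 2 = 1).Nonempty :=
        Finset.card_pos.mp (by omega)
      obtain ⟨i, hi⟩ := hne'
      exact ⟨i, (Finset.mem_filter.mp hi).2⟩
    obtain ⟨i, hi⟩ := hpos
    have hle : b i ≤ ∑ j, b j :=
      Finset.single_le_sum (f := b) (fun j _ => Nat.zero_le _) (Finset.mem_univ i)
    omega
  | succ N ih =>
    intro b hS hEvenO hO2 hdisj
    by_cases hsmall : ∀ i, b i ≤ 1
    · refine ⟨fun _ => 0, nimSum_zero_fn, ?_⟩
      have hfe2 : (fun i => b i + (fun _ : Fin n => 0) i) = fun i => b i + 2 * 0 :=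
        funext fun i => rfl
      rw [hfe2]
      have h : nimSum (List.ofFn fun i => b i + 2 * 0)
          = (∑ i, b i) % 2 + 2 * nimSum (List.ofFn fun _ : Fin n => 0) :=
        nimSum_bits b (fun _ => 0) hsmall
      rw [nimSum_zero_fn] at h
      have hcs : (Finset.univ.filter fun i => b i % 2 = 1).card = ∑ i, b i := by
        rw [Finset.card_filter]
        refine Finset.sum_congr rfl fun i _ => ?_
        have := hsmall i
        by_cases hb : b i % 2 = 1 <;> simp [hb] <;> omega
      obtain ⟨c0, hc0⟩ := hEvenO
      omega
    · push_neg at hsmall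
      obtain ⟨i₀, hi₀⟩ := hsmall
      by_cases hA : (Finset.univ.filter fun i => b i % 2 = 1).card ≤ n - 2
      · -- CASE A : between 2 and n-2 odd entries
        set O := Finset.univ.filter (fun i : Fin n => b i % 2 = 1) with hOdef
        set E1 := Finset.univ.filter
          (fun i : Fin n => b i % 2 = 0 ∧ (b i / 2) % 2 = 1) with hE1def
        set e1 := E1.card with he1def
        set j := if e1 = 0 then 2 else e1 % 2 with hjdef
        have hjcases : (e1 = 0 ∧ j = 2) ∨ (¬ e1 = 0 ∧ j = e1 % 2) := by
          by_cases h : e1 = 0 <;> simp [hjdef, h]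
        have hjle : j ≤ O.card := by
          rcases hjcases with ⟨_, hj⟩ | ⟨_, hj⟩ <;> omega
        obtain ⟨T, hTsub, hTcard⟩ := Finset.exists_subset_card_eq (s := O) (n := j) hjle
        have hsplit : O.card + (Finset.univ.filter (fun i => ¬ b i % 2 = 1)).card = n := by
          rw [hOdef, Finset.card_filter_add_card_filter_not]
          simp
        have hEvNe : (Finset.univ.filter (fun i => ¬ b i % 2 = 1)).Nonempty :=
          Finset.card_pos.mp (by omega)
        obtain ⟨p₀, hp₀⟩ := hEvNe
        have hp₀e : b p₀ % 2 = 0 := by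
          have := (Finset.mem_filter.mp hp₀).2; omega
        set σ := (∑ i ∈ O, ((b i / 2) % 2 + (if i ∈ T then 1 else 0))) % 2 with hσdef
        have hσle : σ ≤ 1 := by omega
        set ε := fun i => if b i % 2 = 1 then ((b i / 2) % 2 + (if i ∈ T then 1 else 0)) % 2
          else if i = p₀ then σ else 0 with hεdef
        have hε1 : ∀ i, ε i ≤ 1 := by
          intro i
          simp only [hεdef]
          by_cases h1 : b i % 2 = 1
          · rw [if_pos h1]; omega
          · rw [if_neg h1]
            by_cases h2 : i = p₀
            · rw [if_pos h2]; omega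
            · rw [if_neg h2]; omega
        have hT_O : ∀ i ∈ T, b i % 2 = 1 := fun i hi =>
          (Finset.mem_filter.mp (hTsub hi)).2
        have hrowO : ∀ i, b i % 2 = 1 → ((b i + ε i) % 2 + ε i = 1) ∧
            ((b i + ε i) / 2) % 2 = (if i ∈ T then 1 else 0) := by
          intro i hb1
          have hεi : ε i = ((b i / 2) % 2 + (if i ∈ T then 1 else 0)) % 2 := by
            simp only [hεdef]; rw [if_pos hb1]
          by_cases hT : i ∈ T
          · rw [if_pos hT] at hεi ⊢
            by_cases hq : (b i / 2) % 2 = 1 <;> simp [hq] at hεi <;> omega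
          · rw [if_neg hT] at hεi ⊢
            by_cases hq : (b i / 2) % 2 = 1 <;> simp [hq] at hεi <;> omega
        have hrowE : ∀ i, b i % 2 = 0 → ((b i + ε i) % 2 = ε i) ∧
            (b i + ε i) / 2 = b i / 2 := by
          intro i hb0
          have hεi := hε1 i
          constructor <;> omega
        have hQ : ∀ i ∈ O, ε i = ((b i / 2) % 2 + (if i ∈ T then 1 else 0)) % 2 := by
          intro i hi
          simp only [hεdef]
          rw [if_pos (Finset.mem_filter.mp hi).2]
        have hSO : (∑ i ∈ O, ε i) % 2 = σ := by
          calc (∑ i ∈ O, ε i) % 2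
              = (∑ i ∈ O, ((b i / 2) % 2 + (if i ∈ T then 1 else 0)) % 2) % 2 := by
                rw [Finset.sum_congr rfl hQ]
            _ = (∑ i ∈ O, ((b i / 2) % 2 + (if i ∈ T then 1 else 0))) % 2 :=
                (Finset.sum_nat_mod _ _ _).symm
            _ = σ := hσdef.symm
        have hnotO : ∀ i ∈ Finset.univ.filter (fun i => ¬ b i % 2 = 1),
            ε i = if i = p₀ then σ else 0 := by
          intro i hi
          have h2 := (Finset.mem_filter.mp hi).2
          simp only [hεdef]
          rw [if_neg h2]
        have hSE : (∑ i ∈ Finset.univ.filter (fun i => ¬ b i % 2 = 1), ε i) = σ := by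
          rw [Finset.sum_congr rfl hnotO, Finset.sum_ite_eq' _ p₀ (fun _ => σ), if_pos hp₀]
        have hEpar : (∑ i, ε i) % 2 = 0 := by
          have hsplit2 := Finset.sum_filter_add_sum_filter_not Finset.univ
            (fun i => b i % 2 = 1) ε
          rw [← hOdef] at hsplit2
          omega
        have hcO : (∑ i ∈ O, (b i + ε i) % 2) + (∑ i ∈ O, ε i) = O.card := by
          rw [← Finset.sum_add_distrib, Finset.card_eq_sum_ones]
          exact Finset.sum_congr rfl fun i hi => (hrowO i (Finset.mem_filter.mp hi).2).1
        have hcE : ∀ i ∈ Finset.univ.filter (fun i => ¬ b i % 2 = 1),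
            (b i + ε i) % 2 = ε i := by
          intro i hi
          have h2 := (Finset.mem_filter.mp hi).2
          exact (hrowE i (by omega)).1
        have hcpar : (∑ i, (b i + ε i) % 2) % 2 = 0 := by
          have hsplit2 := Finset.sum_filter_add_sum_filter_not Finset.univ
            (fun i => b i % 2 = 1) (fun i => (b i + ε i) % 2)
          rw [← hOdef] at hsplit2
          have hEq : (∑ i ∈ Finset.univ.filter (fun i => ¬ b i % 2 = 1), (b i + ε i) % 2)
              = ∑ i ∈ Finset.univ.filter (fun i => ¬ b i % 2 = 1), ε i :=
            Finset.sum_congr rfl hcE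
          obtain ⟨c0, hc0⟩ := hEvenO
          omega
        have hnext : ∀ i, ((b i + ε i) / 2) % 2
            = (if i ∈ T then 1 else 0) + (if i ∈ E1 then 1 else 0) := by
          intro i
          by_cases hb1 : b i % 2 = 1
          · have h1 := (hrowO i hb1).2
            have hiE : i ∉ E1 := by
              rw [hE1def]; simp [hb1]
            simp [hiE, h1]
          · have hb0 : b i % 2 = 0 := by omega
            have h2 := (hrowE i hb0).2
            have hiT : i ∉ T := fun hh => hb1 (hT_O i hh)
            rw [h2]
            by_cases h3 : (b i / 2) % 2 = 1
            · have hiE : i ∈ E1 := by rw [hE1def]; simp [hb0, h3]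
              simp [hiT, hiE, h3]
            · have hiE : i ∉ E1 := by rw [hE1def]; simp [hb0, h3]
              simp [hiT, hiE]
              omega
        have hcard'0 := card_next (fun i => (b i + ε i) / 2) T E1 hnext
        have hcard' : (Finset.univ.filter
            (fun i => ((b i + ε i) / 2) % 2 = 1)).card = T.card + E1.card := hcard'0
        have hE1sub : E1 ⊆ Finset.univ.filter (fun i => ¬ b i % 2 = 1) := by
          intro i hi
          have := (Finset.mem_filter.mp hi).2
          exact Finset.mem_filter.mpr ⟨Finset.mem_univ _, by omega⟩
        have he1le : e1 ≤ n - O.card := by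
          have := Finset.card_le_card hE1sub
          omega
        obtain ⟨m, hm⟩ := hne
        obtain ⟨c1, hc1⟩ := hEvenO
        have hinv1 : Even ((Finset.univ.filter
            (fun i => ((b i + ε i) / 2) % 2 = 1)).card) := by
          rw [Nat.even_iff, hcard', hTcard]
          rcases hjcases with ⟨h0, hj⟩ | ⟨h0, hj⟩ <;> omega
        have hinv2 : 2 ≤ (Finset.univ.filter
            (fun i => ((b i + ε i) / 2) % 2 = 1)).card := by
          rw [hcard', hTcard]
          rcases hjcases with ⟨h0, hj⟩ | ⟨h0, hj⟩ <;> omega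
        have hinv3 : (Finset.univ.filter
            (fun i => ((b i + ε i) / 2) % 2 = 1)).card ≤ n - 2 := by
          rw [hcard', hTcard]
          rcases hjcases with ⟨h0, hj⟩ | ⟨h0, hj⟩ <;> omega
        have hdec : (∑ i, (b i + ε i) / 2) < ∑ i, b i := by
          apply Finset.sum_lt_sum (fun i _ => by have := hε1 i; omega)
          exact ⟨i₀, Finset.mem_univ _, by have := hε1 i₀; omega⟩
        exact glue b ε hε1 hEpar hcpar
          (ih (fun i => (b i + ε i) / 2)
            (by show (∑ i, (b i + ε i) / 2) ≤ N; omega) hinv1 hinv2 (Or.inl hinv3))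
      · -- CASE B : all entries odd
        have hle : (Finset.univ.filter fun i => b i % 2 = 1).card ≤ n := by
          have := Finset.card_le_univ (Finset.univ.filter fun i => b i % 2 = 1)
          simpa using this
        obtain ⟨m, hm⟩ := hne
        obtain ⟨c1, hc1⟩ := hEvenO
        have hcuniv : (Finset.univ.filter fun i => b i % 2 = 1).card = n := by omega
        have hOuniv : (Finset.univ.filter fun i => b i % 2 = 1) = Finset.univ :=
          Finset.eq_univ_of_card _ (by simpa using hcuniv)
        have hallodd : ∀ i, b i % 2 = 1 := by
          intro i
          have hmem : i ∈ Finset.univ.filter (fun i => b i % 2 = 1) :=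
            hOuniv.symm ▸ Finset.mem_univ i
          exact (Finset.mem_filter.mp hmem).2
        have hX4 : nimSum (List.ofFn b) % 4 = 0 := hdisj.resolve_left hA
        obtain ⟨T, hTsub, hTcard⟩ :=
          Finset.exists_subset_card_eq (s := Finset.univ.filter fun i => b i % 2 = 1)
            (n := n - 2) (by omega)
        set ε := fun i => ((b i / 2) % 2 + (if i ∈ T then 1 else 0)) % 2 with hεdef
        have hε1 : ∀ i, ε i ≤ 1 := fun i => by simp only [hεdef]; omega
        have hns : nimSum (List.ofFn b)
            = (∑ i, b i % 2) % 2 + 2 * nimSum (List.ofFn fun i => b i / 2) := by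
          have hfe : (fun i => b i % 2 + 2 * (b i / 2)) = b := funext fun i => by omega
          have h := nimSum_bits (fun i => b i % 2) (fun i => b i / 2)
            (fun i => by show b i % 2 ≤ 1; omega)
          rwa [hfe] at h
        have hβ1 : nimSum (List.ofFn fun i => b i / 2) % 2 = (∑ i, b i / 2) % 2 :=
          nimSum_mod_two _
        have hβ2 : (∑ i, b i / 2) % 2 = (∑ i, (b i / 2) % 2) % 2 :=
          Finset.sum_nat_mod _ _ _
        have hTc : (∑ i, (if i ∈ T then 1 else 0)) = n - 2 := by
          rw [show (∑ i, (if i ∈ T then 1 else 0)) = T.card from by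
            simpa using Finset.sum_ite_mem Finset.univ T (fun _ => 1), hTcard]
        have hEpar : (∑ i, ε i) % 2 = 0 := by
          have h1 : (∑ i, ε i) % 2
              = (∑ i, ((b i / 2) % 2 + (if i ∈ T then 1 else 0))) % 2 := by
            rw [hεdef]
            exact (Finset.sum_nat_mod _ _ _).symm
          rw [Finset.sum_add_distrib, hTc] at h1
          omega
        have hrow : ∀ i, (b i + ε i) % 2 + ε i = 1 := by
          intro i
          have h1 := hε1 i
          have h2 := hallodd i
          omega
        have hcpar : (∑ i, (b i + ε i) % 2) % 2 = 0 := by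
          have hsum : (∑ i, ((b i + ε i) % 2 + ε i)) = n := by
            rw [Finset.sum_congr rfl (fun i _ => hrow i)]
            simp
          rw [Finset.sum_add_distrib] at hsum
          omega
        have hnext : ∀ i, ((b i + ε i) / 2) % 2
            = (if i ∈ T then 1 else 0) + (if i ∈ (∅ : Finset (Fin n)) then 1 else 0) := by
          intro i
          simp only [Finset.notMem_empty, if_false, add_zero]
          have h2 := hallodd i
          have hεi : ε i = ((b i / 2) % 2 + (if i ∈ T then 1 else 0)) % 2 := by
            simp only [hεdef]
          by_cases hT : i ∈ T
          · rw [if_pos hT] at hεi ⊢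
            by_cases hq : (b i / 2) % 2 = 1 <;> simp [hq] at hεi <;> omega
          · rw [if_neg hT] at hεi ⊢
            by_cases hq : (b i / 2) % 2 = 1 <;> simp [hq] at hεi <;> omega
        have hcard' := card_next (fun i => (b i + ε i) / 2) T ∅ hnext
        rw [Finset.card_empty, Nat.add_zero, hTcard] at hcard'
        have hcardB : (Finset.univ.filter
            (fun i => ((b i + ε i) / 2) % 2 = 1)).card = n - 2 := hcard'
        have hinv1 : Even ((Finset.univ.filter
            (fun i => ((b i + ε i) / 2) % 2 = 1)).card) := by
          rw [Nat.even_iff, hcardB]; omega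
        have hinv2 : 2 ≤ (Finset.univ.filter
            (fun i => ((b i + ε i) / 2) % 2 = 1)).card := by omega
        have hinv3 : (Finset.univ.filter
            (fun i => ((b i + ε i) / 2) % 2 = 1)).card ≤ n - 2 := by omega
        have hdec : (∑ i, (b i + ε i) / 2) < ∑ i, b i := by
          apply Finset.sum_lt_sum (fun i _ => by have := hε1 i; omega)
          exact ⟨i₀, Finset.mem_univ _, by have := hε1 i₀; omega⟩
        exact glue b ε hε1 hEpar hcpar
          (ih (fun i => (b i + ε i) / 2)
            (by show (∑ i, (b i + ε i) / 2) ≤ N; omega) hinv1 hinv2 (Or.inl hinv3))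

lemma testBit_pow_mul (k : ℕ) : ∀ j m : ℕ, (2 ^ k * m).testBit (k + j) = m.testBit j := by
  induction k with
  | zero => intro j m; simp
  | succ i ih =>
    intro j m
    have h1 : 2 ^ (i + 1) * m = 2 * (2 ^ i * m) := by ring
    have h2 : i + 1 + j = (i + j) + 1 := by omega
    rw [h1, h2, Nat.testBit_succ, Nat.mul_div_cancel_left _ (by norm_num), ih]

theorem stmt15 (n : ℕ) (heven : Even n) (hn : 4 ≤ n) (a : Fin n → ℕ)
    (hpos : ∃ i j, i ≠ j ∧ 0 < a i ∧ 0 < a j)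
    (k : ℕ) (hk : ∀ i, 2 ^ k ∣ a i) (hkmax : ¬ ∀ i, 2 ^ (k + 1) ∣ a i)
    (hsmooth : (nimSum (List.ofFn a)).testBit k = false ∧
      (nimSum (List.ofFn a)).testBit (k + 1) = false) :
    ∃ t : Fin n → ℕ, (∀ i, a i ≤ t i) ∧
      nimSum (List.ofFn t) = 0 ∧
      nimSum (List.ofFn fun i => t i - a i) = 0 := by
  classical
  obtain ⟨hsb, hsb1⟩ := hsmooth
  set b : Fin n → ℕ := fun i => a i / 2 ^ k with hbdef
  have hab : ∀ i, a i = 2 ^ k * b i := fun i => (Nat.mul_div_cancel' (hk i)).symm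
  have hnsa : nimSum (List.ofFn a) = 2 ^ k * nimSum (List.ofFn b) := by
    calc nimSum (List.ofFn a) = nimSum (List.ofFn fun i => 2 ^ k * b i) := by
          congr 1; exact congrArg _ (funext hab)
    _ = 2 ^ k * nimSum (List.ofFn b) := nimSum_pow k b
  have hX0 : nimSum (List.ofFn b) % 2 = 0 := by
    have h := hsb
    rw [hnsa] at h
    have h2 := testBit_pow_mul k 0 (nimSum (List.ofFn b))
    rw [Nat.add_zero] at h2
    rw [h2] at h
    simp [Nat.testBit_zero] at h
    omega
  have hX1 : (nimSum (List.ofFn b) / 2) % 2 = 0 := by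
    have h := hsb1
    rw [hnsa] at h
    have h2 := testBit_pow_mul k 1 (nimSum (List.ofFn b))
    rw [h2] at h
    rw [Nat.testBit_succ] at h
    simp [Nat.testBit_zero] at h
    omega
  have hcardsum : (Finset.univ.filter (fun i => b i % 2 = 1)).card = ∑ i, b i % 2 := by
    rw [Finset.card_filter]
    refine Finset.sum_congr rfl (fun i _ => ?_)
    by_cases h : b i % 2 = 1 <;> simp [h] <;> omega
  have hcard2 : (Finset.univ.filter (fun i => b i % 2 = 1)).card % 2 = 0 := by
    have h1 := nimSum_mod_two b
    have h2 := Finset.sum_nat_mod Finset.univ 2 b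
    omega
  have hEvenO : Even (Finset.univ.filter (fun i => b i % 2 = 1)).card :=
    Nat.even_iff.mpr hcard2
  have hodd : ∃ i, b i % 2 = 1 := by
    by_contra hc
    push_neg at hc
    apply hkmax
    intro i
    have hbe : b i % 2 = 0 := by have := hc i; omega
    refine ⟨b i / 2, ?_⟩
    have h2 : 2 * (b i / 2) = b i := by omega
    calc a i = 2 ^ k * b i := hab i
    _ = 2 ^ k * (2 * (b i / 2)) := by rw [h2]
    _ = 2 ^ (k + 1) * (b i / 2) := by ring
  obtain ⟨i₁, hi₁⟩ := hodd
  have hO1 : 1 ≤ (Finset.univ.filter (fun i => b i % 2 = 1)).card :=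
    Finset.card_pos.mpr ⟨i₁, Finset.mem_filter.mpr ⟨Finset.mem_univ _, hi₁⟩⟩
  have hO2 : 2 ≤ (Finset.univ.filter (fun i => b i % 2 = 1)).card := by
    obtain ⟨c, hc⟩ := hEvenO; omega
  have hdisj : (Finset.univ.filter (fun i => b i % 2 = 1)).card ≤ n - 2
      ∨ nimSum (List.ofFn b) % 4 = 0 := by
    by_cases h : (Finset.univ.filter (fun i => b i % 2 = 1)).card ≤ n - 2
    · exact Or.inl h
    · right; omega
  obtain ⟨x', hx1, hx2⟩ := core hn heven (∑ i, b i) b le_rfl hEvenO hO2 hdisj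
  refine ⟨fun i => a i + 2 ^ k * x' i, fun i => Nat.le_add_right _ _, ?_, ?_⟩
  · have hfe : (fun i => a i + 2 ^ k * x' i) = fun i => 2 ^ k * (b i + x' i) := by
      funext i; rw [hab i]; ring
    rw [hfe, nimSum_pow, hx2, Nat.mul_zero]
  · have hfe : (fun i => (a i + 2 ^ k * x' i) - a i) = fun i => 2 ^ k * x' i := by
      funext i; omega
    rw [hfe, nimSum_pow, hx1, Nat.mul_zero]
end
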